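/- For an integer t ≥ 2, define over {0,1} the words y = 0 1^{t−1} 0 and x_i = 1^{t−i−1} 0 1^{i+1} for 0 ≤ i ≤ t−2, and let S_t = {0, x_0, x_1, ..., x_{t−2}, y}. Then the state complexity of S_t* is at least 2^{t−2}. -/

import Mathlib

open Computability

/-- The state complexity of a language: the least number of states of a complete DFA
accepting it. -/
noncomputable def stateComplexity {α : Type} (L : Language α) : ℕ :=
  sInf {n : ℕ | ∃ M : DFA α (Fin n), M.accepts = L}

namespace StP

open List


abbrev W2 := List (Fin 2)

variable (t : ℕ)

def gx (a : ℕ) : W2 := List.replicate a 1 ++ 0 :: List.replicate (t - a) 1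
def gy : W2 := 0 :: (List.replicate (t - 1) 1 ++ [0])

def SS : Language (Fin 2) :=
  {g | g = [0] ∨ (∃ a, 1 ≤ a ∧ a ≤ t - 1 ∧ g = gx t a) ∨ g = gy t}

variable {t}

lemma nil_mem_L : [] ∈ (SS t)∗ := Language.nil_mem_kstar _

lemma append_mem_L {u g : W2} (hu : u ∈ (SS t)∗) (hg : g ∈ SS t) : u ++ g ∈ (SS t)∗ := by
  rw [Language.mem_kstar] at hu ⊢
  obtain ⟨l, rfl, hl⟩ := hu
  refine ⟨l ++ [g], by simp, ?_⟩
  intro y hy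
  rcases List.mem_append.1 hy with h | h
  · exact hl y h
  · simp only [List.mem_singleton] at h
    exact h ▸ hg

lemma mem_ss_ne_nil {g : W2} (hg : g ∈ SS t) : g ≠ [] := by
  rcases hg with h | ⟨a, _, _, h⟩ | h <;> subst h <;> simp [gx, gy]

lemma zero_mem_of_ss {g : W2} (hg : g ∈ SS t) : (0 : Fin 2) ∈ g := by
  rcases hg with h | ⟨a, _, _, h⟩ | h <;> subst h <;> simp [gx, gy]

lemma exists_last {w : W2} (hw : w ∈ (SS t)∗) (hne : w ≠ []) :
    ∃ u ∈ (SS t)∗, ∃ g ∈ SS t, w = u ++ g := by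
  rw [Language.mem_kstar] at hw
  obtain ⟨l, rfl, hl⟩ := hw
  rcases List.eq_nil_or_concat l with rfl | ⟨l', g, rfl⟩
  · simp at hne
  · refine ⟨l'.flatten, ?_, g, hl g (by simp), by simp⟩
    exact Language.join_mem_kstar fun y hy => hl y (by simp [hy])

lemma ones_mem_L {k : ℕ} (h : List.replicate k (1 : Fin 2) ∈ (SS t)∗) : k = 0 := by
  by_contra hk
  obtain ⟨u, _, g, hg, heq⟩ := exists_last h (by simp [hk])
  have h0 : (0 : Fin 2) ∈ List.replicate k (1 : Fin 2) := by
    rw [heq]; exact List.mem_append.2 (Or.inr (zero_mem_of_ss hg))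
  have := List.eq_of_mem_replicate h0
  simp at this

lemma snoc_inj {p q : W2} {a b : Fin 2} (h : p ++ [a] = q ++ [b]) : p = q ∧ a = b := by
  have := List.append_inj' h rfl
  simpa using this

/-- tail run alignment, head version -/
lemma head_run_aux : ∀ (m n : ℕ) (p q : W2),
    List.replicate m (1 : Fin 2) ++ 0 :: p = List.replicate n 1 ++ 0 :: q → m = n ∧ p = q := by
  intro m
  induction m with
  | zero =>
    intro n p q h
    cases n with
    | zero => simpa using h
    | succ n => simp [List.replicate_succ] at h
  | succ m ih =>
    intro n p q h
    cases n with
    | zero => simp [List.replicate_succ] at h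
    | succ n =>
      simp only [List.replicate_succ, List.cons_append, List.cons.injEq] at h
      obtain ⟨hm, hp⟩ := ih n p q h.2
      exact ⟨by omega, hp⟩

lemma tail_run {xs ys : W2} {m n : ℕ}
    (h : xs ++ 0 :: List.replicate m (1 : Fin 2) = ys ++ 0 :: List.replicate n 1) :
    m = n ∧ xs = ys := by
  have h' := congrArg List.reverse h
  simp only [List.reverse_append, List.reverse_cons, List.reverse_replicate] at h'
  have h'' : List.replicate m (1 : Fin 2) ++ 0 :: xs.reverse
      = List.replicate n 1 ++ 0 :: ys.reverse := by
    simpa [List.append_assoc] using h'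
  obtain ⟨hmn, hr⟩ := head_run_aux m n _ _ h''
  exact ⟨hmn, by simpa using congrArg List.reverse hr⟩


variable {t : ℕ}

def SplP (t : ℕ) (v : W2) (e : ℕ) : Prop :=
  ∃ u ∈ (SS t)∗, v = u ++ List.replicate e 1

def Ycond (t : ℕ) (v : W2) : Prop :=
  ∃ u ∈ (SS t)∗, v = u ++ 0 :: List.replicate (t - 1) 1

lemma splp_zero {v : W2} : SplP t v 0 ↔ v ∈ (SS t)∗ := by
  constructor
  · rintro ⟨u, hu, rfl⟩; simpa using hu
  · intro h; exact ⟨v, h, by simp⟩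

lemma mem0 (ht : 2 ≤ t) (v : W2) (k : ℕ) :
    v ++ 0 :: List.replicate k (1 : Fin 2) ∈ (SS t)∗ ↔
      ((1 ≤ k ∧ k ≤ t - 1 ∧ SplP t v (t - k)) ∨ (k = 0 ∧ (SplP t v 0 ∨ Ycond t v))) := by
  constructor
  · intro h
    obtain ⟨u, hu, g, hg, heq⟩ := exists_last h (by simp)
    rcases hg with rfl | ⟨a, ha1, ha2, rfl⟩ | rfl
    · -- g = [0]
      have heq' : v ++ 0 :: List.replicate k (1:Fin 2) = u ++ 0 :: List.replicate 0 1 := by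
        simpa using heq
      obtain ⟨hk, rfl⟩ := tail_run heq'
      exact Or.inr ⟨hk, Or.inl (splp_zero.2 hu)⟩
    · -- g = gx a
      rw [gx, ← List.append_assoc] at heq
      obtain ⟨hk, hv⟩ := tail_run heq
      subst hk
      refine Or.inl ⟨by omega, by omega, ?_⟩
      have h3 : t - (t - a) = a := by omega
      rw [h3]
      exact ⟨u, hu, hv⟩
    · -- g = gy
      have heq' : v ++ 0 :: List.replicate k (1:Fin 2)
          = (u ++ 0 :: List.replicate (t-1) 1) ++ 0 :: List.replicate 0 1 := by
        simpa [gy] using heq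
      obtain ⟨hk, hv⟩ := tail_run heq'
      exact Or.inr ⟨hk, Or.inr ⟨u, hu, hv⟩⟩
  · rintro (⟨hk1, hk2, u, hu, rfl⟩ | ⟨rfl, h | h⟩)
    · have hxk : t - (t - k) = k := by omega
      have hx : gx t (t - k) = List.replicate (t-k) (1:Fin 2) ++ 0 :: List.replicate k 1 := by
        rw [gx, hxk]
      have := append_mem_L hu (show gx t (t-k) ∈ SS t from Or.inr (Or.inl ⟨t - k, by omega, by omega, rfl⟩))
      rw [hx, ← List.append_assoc] at this
      exact this
    · have h0 : ([0] : W2) ∈ SS t := Or.inl rfl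
      have := append_mem_L (splp_zero.1 h) h0
      simpa using this
    · obtain ⟨u, hu, rfl⟩ := h
      have := append_mem_L hu (show gy t ∈ SS t from Or.inr (Or.inr rfl))
      rw [gy] at this
      simpa using this

lemma splp_split (v : W2) (c e : ℕ) :
    SplP t (v ++ 0 :: List.replicate c 1) e ↔
      e ≤ c ∧ (v ++ 0 :: List.replicate (c - e) (1 : Fin 2)) ∈ (SS t)∗ := by
  constructor
  · rintro ⟨u, hu, heq⟩
    rcases le_or_gt e c with hec | hec
    · have hsplit : (0 : Fin 2) :: List.replicate c 1
          = (0 :: List.replicate (c - e) 1) ++ List.replicate e 1 := by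
        simp [← List.replicate_add]; omega
      rw [hsplit, ← List.append_assoc] at heq
      have := List.append_inj' heq (by simp)
      refine ⟨hec, ?_⟩
      rw [this.1]; exact hu
    · exfalso
      have hsplit : List.replicate e (1 : Fin 2)
          = List.replicate (e - c - 1) 1 ++ 1 :: List.replicate c 1 := by
        rw [show (1 : Fin 2) :: List.replicate c 1 = List.replicate (c+1) 1 from rfl,
          ← List.replicate_add]
        congr 1; omega
      rw [hsplit, ← List.append_assoc] at heq
      have := List.append_inj' heq (by simp)
      have h2 := this.2
      simp at h2
  · rintro ⟨hec, hmem⟩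
    refine ⟨v ++ 0 :: List.replicate (c - e) 1, hmem, ?_⟩
    simp only [List.append_assoc, List.cons_append]
    congr 2
    rw [← List.replicate_add]
    congr 1; omega

lemma splp_step (ht : 2 ≤ t) (v : W2) (c e : ℕ) :
    SplP t (v ++ 0 :: List.replicate c 1) e ↔
      e ≤ c ∧ ((1 ≤ c - e ∧ c - e ≤ t - 1 ∧ SplP t v (t - (c - e))) ∨
        (c - e = 0 ∧ (SplP t v 0 ∨ Ycond t v))) := by
  rw [splp_split, mem0 ht]

lemma ycond_step (v : W2) (c : ℕ) :
    Ycond t (v ++ 0 :: List.replicate c 1) ↔ (c = t - 1 ∧ SplP t v 0) := by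
  constructor
  · rintro ⟨u, hu, heq⟩
    obtain ⟨hc, hv⟩ := tail_run heq
    exact ⟨hc, splp_zero.2 (hv ▸ hu)⟩
  · rintro ⟨rfl, h⟩
    exact ⟨v, splp_zero.1 h, rfl⟩


variable {t : ℕ}

def appRun (v : W2) (c : ℕ) : W2 := v ++ 0 :: List.replicate c 1

def walkW (t : ℕ) (v : W2) : ℕ → W2
  | 0 => v
  | i + 1 => appRun (walkW t v i) (t - 1)

def WA (t : ℕ) : ℕ → W2
  | 0 => [0]
  | j + 1 => appRun (walkW t (WA t j) (j + 1)) (j + 1)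

lemma single_mem_L {g : W2} (hg : g ∈ SS t) : g ∈ (SS t)∗ := by
  have := append_mem_L (nil_mem_L) hg
  simpa using this

lemma splp_WA0 (e : ℕ) : SplP t (WA t 0) e ↔ e ≤ 0 := by
  constructor
  · rintro ⟨u, hu, heq⟩
    cases e with
    | zero => simp
    | succ e =>
      exfalso
      rw [List.replicate_succ', ← List.append_assoc] at heq
      have heq' : ([] : W2) ++ [0] = (u ++ List.replicate e 1) ++ [1] := by simpa [WA] using heq
      have := (snoc_inj heq').2
      simp at this
  · intro he
    interval_cases e
    exact ⟨[0], single_mem_L (Or.inl rfl), by simp [WA]⟩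

lemma ycond_WA0 (ht : 2 ≤ t) : ¬ Ycond t (WA t 0) := by
  rintro ⟨u, hu, heq⟩
  have := congrArg List.length heq
  simp [WA] at this
  omega

lemma walk_inv (ht : 2 ≤ t) {v : W2} {j : ℕ} (hj : j ≤ t - 2)
    (hv : ∀ e, SplP t v e ↔ e ≤ j) (hy : ¬ Ycond t v) :
    ∀ i, i ≤ j + 1 →
      (∀ e, SplP t (walkW t v i) e ↔ ((e + i ≤ j) ∨ (1 ≤ i ∧ t - i ≤ e ∧ e ≤ t - 1)))
      ∧ (Ycond t (walkW t v i) ↔ 1 ≤ i) := by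
  intro i
  induction i with
  | zero =>
    intro _
    constructor
    · intro e; rw [walkW, hv]; omega
    · rw [walkW]; simp [hy]
  | succ i ih =>
    intro hi
    obtain ⟨ihS, ihY⟩ := ih (by omega)
    have hii : i ≤ j := by omega
    constructor
    · intro e
      rw [show walkW t v (i+1) = appRun (walkW t v i) (t-1) from rfl, appRun,
        splp_step ht]
      rw [ihS, ihS, ihY]
      omega
    · rw [show walkW t v (i+1) = appRun (walkW t v i) (t-1) from rfl, appRun,
        ycond_step, ihS]
      omega

lemma invA (ht : 2 ≤ t) : ∀ j, j ≤ t - 1 →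
    (∀ e, SplP t (WA t j) e ↔ e ≤ j) ∧ ¬ Ycond t (WA t j) := by
  intro j
  induction j with
  | zero => exact fun _ => ⟨splp_WA0, ycond_WA0 ht⟩
  | succ j ih =>
    intro hj
    obtain ⟨ihS, ihY⟩ := ih (by omega)
    have hj2 : j ≤ t - 2 := by omega
    obtain ⟨wS, wY⟩ := walk_inv ht hj2 ihS ihY (j+1) le_rfl
    constructor
    · intro e
      rw [show WA t (j+1) = appRun (walkW t (WA t j) (j+1)) (j+1) from rfl, appRun,
        splp_step ht]
      rw [wS, wS, wY]
      omega
    · rw [show WA t (j+1) = appRun (walkW t (WA t j) (j+1)) (j+1) from rfl, appRun,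
        ycond_step, wS]
      omega

def WB (t : ℕ) : ℕ → List ℕ → W2 → W2
  | cur, [], v => appRun v cur
  | cur, g' :: rest, v => WB t g' rest (appRun v (t - g' + cur))

lemma invB (ht : 2 ≤ t) : ∀ (rest : List ℕ) (cur : ℕ) (D : ℕ → Prop) (v : W2),
    1 ≤ cur → cur ≤ t - 2 → (∀ g ∈ rest, cur < g ∧ g ≤ t - 2) →
    List.Pairwise (· < ·) rest →
    (∀ h, D h → 1 ≤ h ∧ h < cur) →
    (∀ e, SplP t v e ↔ (e ≤ t - cur ∨ ∃ h, D h ∧ e = (t - cur) + h)) →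
    ∀ e, SplP t (WB t cur rest v) e ↔ (e = 0 ∨ D e ∨ e = cur ∨ e ∈ rest) := by
  intro rest
  induction rest with
  | nil =>
    intro cur D v hc1 hc2 _ _ hD hv e
    rw [show WB t cur [] v = appRun v cur from rfl, appRun, splp_step ht]
    constructor
    · rintro ⟨he, ⟨h1, h2, hS⟩ | ⟨h0, _⟩⟩
      · rcases (hv _).1 hS with hle | ⟨h', hDh', heq⟩
        · left; omega
        · right; left
          have : e = h' := by omega
          rwa [this]
      · right; right; left; omega
    · rintro (rfl | hDe | rfl | hmem)
      · refine ⟨by omega, Or.inl ⟨by omega, by omega, (hv _).2 (Or.inl (by omega))⟩⟩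
      · have := hD _ hDe
        exact ⟨by omega, Or.inl ⟨by omega, by omega,
          (hv _).2 (Or.inr ⟨e, hDe, by omega⟩)⟩⟩
      · exact ⟨le_rfl, Or.inr ⟨by omega, Or.inl ((hv _).2 (Or.inl (by omega)))⟩⟩
      · simp at hmem
  | cons g' rest' ih =>
    intro cur D v hc1 hc2 hrest hpw hD hv e
    have hg'1 : cur < g' := (hrest g' (by simp)).1
    have hg'2 : g' ≤ t - 2 := (hrest g' (by simp)).2
    have hv' : ∀ e, SplP t (appRun v (t - g' + cur)) e ↔
        (e ≤ t - g' ∨ ∃ h, (D h ∨ h = cur) ∧ e = (t - g') + h) := by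
      intro e
      rw [appRun, splp_step ht]
      constructor
      · rintro ⟨he, ⟨h1, h2, hS⟩ | ⟨h0, _⟩⟩
        · rcases (hv _).1 hS with hle | ⟨h', hDh', heq⟩
          · left; omega
          · have := hD _ hDh'
            right; exact ⟨h', Or.inl hDh', by omega⟩
        · right; exact ⟨cur, Or.inr rfl, by omega⟩
      · rintro (hle | ⟨h', hDh' | rfl, rfl⟩)
        · exact ⟨by omega, Or.inl ⟨by omega, by omega,
            (hv _).2 (Or.inl (by omega))⟩⟩
        · have := hD _ hDh'
          exact ⟨by omega, Or.inl ⟨by omega, by omega,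
            (hv _).2 (Or.inr ⟨h', hDh', by omega⟩)⟩⟩
        · exact ⟨by omega, Or.inr ⟨by omega, Or.inl ((hv _).2 (Or.inl (by omega)))⟩⟩
    have hrec := ih g' (fun h => D h ∨ h = cur) (appRun v (t - g' + cur))
      (by omega) hg'2
      (fun g hg => ⟨(List.pairwise_cons.1 hpw).1 g hg, (hrest g (by simp [hg])).2⟩)
      (List.pairwise_cons.1 hpw).2
      (by rintro h (hDh | rfl); · have := hD _ hDh; omega
          · omega)
      hv'
    rw [show WB t cur (g' :: rest') v = WB t g' rest' (appRun v (t - g' + cur)) from rfl,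
      hrec e]
    simp only [List.mem_cons]
    tauto


variable {t : ℕ}

def wordOf (t : ℕ) : List ℕ → W2
  | [] => appRun (WA t 0) 1
  | g :: rest => appRun (WB t g rest (WA t (t - g))) 1

lemma appRun_ones (v : W2) (c d : ℕ) :
    appRun v c ++ List.replicate d 1 = appRun v (c + d) := by
  simp [appRun, ← List.replicate_add]

lemma probe_char (ht : 2 ≤ t) (G : List ℕ) (hpw : List.Pairwise (· < ·) G)
    (hb : ∀ g ∈ G, 1 ≤ g ∧ g ≤ t - 2) (d : ℕ) (hd1 : 1 ≤ d) (hd2 : d ≤ t - 2) :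
    (wordOf t G ++ List.replicate d 1 ∈ (SS t)∗) ↔ (t - 1 - d) ∈ G := by
  cases G with
  | nil =>
    rw [show wordOf t [] = appRun (WA t 0) 1 from rfl, appRun_ones, appRun, mem0 ht]
    rw [splp_WA0]
    simp only [List.not_mem_nil, iff_false]
    rintro (⟨h1, h2, h3⟩ | ⟨h0, _⟩) <;> omega
  | cons g rest =>
    have hg := hb g (by simp)
    have hWB := invB ht rest g (fun _ => False) (WA t (t - g)) (by omega) (by omega)
      (fun g' hg' => ⟨(List.pairwise_cons.1 hpw).1 g' hg', (hb g' (by simp [hg'])).2⟩)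
      (List.pairwise_cons.1 hpw).2 (by simp)
      (by intro e
          rw [(invA ht (t - g) (by omega)).1 e]
          constructor
          · exact fun h => Or.inl h
          · rintro (h | ⟨h', hF, _⟩); · exact h
            · exact absurd hF (by simp))
    rw [show wordOf t (g :: rest) = appRun (WB t g rest (WA t (t - g))) 1 from rfl,
      appRun_ones, appRun, mem0 ht, hWB]
    have harith : t - (1 + d) = t - 1 - d := by omega
    rw [harith]
    simp only [List.mem_cons]
    constructor
    · rintro (⟨h1, h2, h3 | h3 | h3 | h3⟩ | ⟨h0, _⟩) <;> first | omega | exact h3.elim | exact Or.inl h3 | exact Or.inr h3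
    · rintro (h | h)
      · exact Or.inl ⟨by omega, by omega, Or.inr (Or.inr (Or.inl h))⟩
      · exact Or.inl ⟨by omega, by omega, Or.inr (Or.inr (Or.inr h))⟩

def Gls (t : ℕ) (T : Finset (Fin (t - 2))) : List ℕ :=
  (T.image fun i => t - 2 - i.val).sort (· ≤ ·)

lemma Gls_pairwise (T : Finset (Fin (t - 2))) : List.Pairwise (· < ·) (Gls t T) :=
  (Finset.sortedLT_sort _).pairwise

lemma Gls_mem {T : Finset (Fin (t - 2))} {g : ℕ} :
    g ∈ Gls t T ↔ ∃ i ∈ T, t - 2 - i.val = g := by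
  simp [Gls, Finset.mem_sort]

lemma Gls_bounds (ht : 2 ≤ t) (T : Finset (Fin (t - 2))) :
    ∀ g ∈ Gls t T, 1 ≤ g ∧ g ≤ t - 2 := by
  intro g hg
  obtain ⟨i, _, rfl⟩ := Gls_mem.1 hg
  have := i.isLt
  omega

lemma probe_iff (ht : 2 ≤ t) (T : Finset (Fin (t - 2))) (i : Fin (t - 2)) :
    (wordOf t (Gls t T) ++ List.replicate (i.val + 1) 1 ∈ (SS t)∗) ↔ i ∈ T := by
  have hi := i.isLt
  rw [probe_char ht _ (Gls_pairwise T) (Gls_bounds ht T) (i.val + 1) (by omega) (by omega)]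
  have : t - 1 - (i.val + 1) = t - 2 - i.val := by omega
  rw [this, Gls_mem]
  constructor
  · rintro ⟨i', hi', heq⟩
    have := i'.isLt
    have : i' = i := Fin.ext (by omega)
    rwa [← this]
  · exact fun h => ⟨i, h, rfl⟩

lemma card_bound (ht : 2 ≤ t) {n : ℕ} (M : DFA (Fin 2) (Fin n))
    (hM : M.accepts = (SS t)∗) : 2 ^ (t - 2) ≤ n := by
  have hinj : Function.Injective (fun T : Finset (Fin (t - 2)) => M.eval (wordOf t (Gls t T))) := by
    intro T₁ T₂ hT
    simp only at hT
    ext i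
    have h1 := probe_iff ht T₁ i
    have h2 := probe_iff ht T₂ i
    rw [← hM] at h1 h2
    rw [DFA.mem_accepts] at h1 h2
    rw [show M.eval (wordOf t (Gls t T₁) ++ List.replicate (i.val + 1) 1)
        = M.evalFrom (M.eval (wordOf t (Gls t T₁))) (List.replicate (i.val + 1) 1) from
        M.evalFrom_of_append _ _ _] at h1
    rw [show M.eval (wordOf t (Gls t T₂) ++ List.replicate (i.val + 1) 1)
        = M.evalFrom (M.eval (wordOf t (Gls t T₂))) (List.replicate (i.val + 1) 1) from
        M.evalFrom_of_append _ _ _] at h2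
    rw [← h1, ← h2, hT]
  have := Fintype.card_le_of_injective _ hinj
  simpa using this


variable {t : ℕ}

abbrev St (t : ℕ) := (Fin t × Fin t) ⊕ Fin t

def ntStep (t : ℕ) : St t → Fin 2 → Set (St t)
  | .inl im, c =>
      {s' | (c = 1 ∧ ∃ i' : Fin t, i'.val + 1 = im.1.val ∧ s' = .inl (i', im.2)) ∨
            (c = 0 ∧ im.1.val = 0 ∧ s' = .inr im.2)}
  | .inr j, c =>
      {s' | (c = 1 ∧ ((∃ j' : Fin t, j'.val + 1 = j.val ∧ s' = .inr j') ∨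
              (j.val = 0 ∧ ∃ i' m' : Fin t, i'.val + m'.val = t - 1 ∧ 1 ≤ m'.val ∧
                s' = .inl (i', m')))) ∨
            (c = 0 ∧ j.val = 0 ∧ (s' = .inr j ∨
              ∃ i' m' : Fin t, i'.val = t - 1 ∧ m'.val = 0 ∧ s' = .inl (i', m')))}

def Nt (t : ℕ) : NFA (Fin 2) (St t) where
  step := ntStep t
  start := {s | ∃ j : Fin t, j.val = 0 ∧ s = .inr j}
  accept := {s | ∃ j : Fin t, j.val = 0 ∧ s = .inr j}

lemma mem_ntStep_inl {i m : Fin t} {c : Fin 2} {s' : St t} :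
    s' ∈ ntStep t (.inl (i, m)) c ↔
      ((c = 1 ∧ ∃ i' : Fin t, i'.val + 1 = i.val ∧ s' = .inl (i', m)) ∨
       (c = 0 ∧ i.val = 0 ∧ s' = .inr m)) := Iff.rfl

lemma mem_ntStep_inr {j : Fin t} {c : Fin 2} {s' : St t} :
    s' ∈ ntStep t (.inr j) c ↔
      ((c = 1 ∧ ((∃ j' : Fin t, j'.val + 1 = j.val ∧ s' = .inr j') ∨
          (j.val = 0 ∧ ∃ i' m' : Fin t, i'.val + m'.val = t - 1 ∧ 1 ≤ m'.val ∧
            s' = .inl (i', m')))) ∨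
       (c = 0 ∧ j.val = 0 ∧ (s' = .inr j ∨
          ∃ i' m' : Fin t, i'.val = t - 1 ∧ m'.val = 0 ∧ s' = .inl (i', m')))) := Iff.rfl

def sem (t : ℕ) : St t → W2 → Prop
  | .inl im, w =>
      (1 ≤ im.2.val ∧ im.1.val + im.2.val ≤ t - 1 ∧ SplP t w (t - im.2.val - im.1.val)) ∨
      (im.2.val = 0 ∧ ∃ u ∈ (SS t)∗, w = u ++ 0 :: List.replicate (t - 1 - im.1.val) 1)
  | .inr j, w =>
      (j.val = 0 ∧ w ∈ (SS t)∗) ∨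
      (1 ≤ j.val ∧ ∃ u ∈ (SS t)∗, ∃ a, 1 ≤ a ∧ a + j.val ≤ t ∧
        w = u ++ (List.replicate a 1 ++ 0 :: List.replicate (t - a - j.val) 1))

lemma sem_inl {i m : Fin t} {w : W2} :
    sem t (.inl (i, m)) w ↔
      ((1 ≤ m.val ∧ i.val + m.val ≤ t - 1 ∧ SplP t w (t - m.val - i.val)) ∨
       (m.val = 0 ∧ ∃ u ∈ (SS t)∗, w = u ++ 0 :: List.replicate (t - 1 - i.val) 1)) := Iff.rfl

lemma sem_inr {j : Fin t} {w : W2} :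
    sem t (.inr j) w ↔
      ((j.val = 0 ∧ w ∈ (SS t)∗) ∨
       (1 ≤ j.val ∧ ∃ u ∈ (SS t)∗, ∃ a, 1 ≤ a ∧ a + j.val ≤ t ∧
         w = u ++ (List.replicate a 1 ++ 0 :: List.replicate (t - a - j.val) 1))) := Iff.rfl

lemma splp_snoc1 {w : W2} {e : ℕ} (h : SplP t w e) : SplP t (w ++ [1]) (e + 1) := by
  obtain ⟨u, hu, rfl⟩ := h
  exact ⟨u, hu, by simp [List.replicate_succ']⟩

lemma cons_rep_snoc (k : ℕ) :
    (0 : Fin 2) :: List.replicate (k + 1) 1 = (0 :: List.replicate k 1) ++ [1] := by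
  simp [List.replicate_succ']

lemma rep_one : List.replicate 1 (1 : Fin 2) = [1] := rfl

lemma zero_fin : ((0 : Fin 2) = 1) = False := by simp [Fin.ext_iff]


variable {t : ℕ}

lemma step_sem_fwd (ht : 2 ≤ t) {w : W2} {c : Fin 2} {s : St t}
    (h : ∃ s₀, sem t s₀ w ∧ s ∈ ntStep t s₀ c) : sem t s (w ++ [c]) := by
  obtain ⟨s₀, hsem, hstep⟩ := h
  rcases s₀ with ⟨i, m⟩ | j
  · rw [mem_ntStep_inl] at hstep
    rcases hstep with ⟨rfl, i', hi', rfl⟩ | ⟨rfl, hi0, rfl⟩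
    · -- letter 1, pending (i,m) → (i', m) with i' + 1 = i
      rw [sem_inl] at hsem ⊢
      rcases hsem with ⟨hm, him, hS⟩ | ⟨hm0, u, hu, rfl⟩
      · refine Or.inl ⟨hm, by omega, ?_⟩
        have harith : t - m.val - i'.val = (t - m.val - i.val) + 1 := by omega
        rw [harith]
        exact splp_snoc1 hS
      · refine Or.inr ⟨hm0, u, hu, ?_⟩
        have harith : t - 1 - i'.val = (t - 1 - i.val) + 1 := by omega
        rw [harith, cons_rep_snoc]
        simp
    · -- letter 0, pending (0,m) → inr m
      rw [sem_inl] at hsem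
      rw [sem_inr]
      rcases hsem with ⟨hm, him, hS⟩ | ⟨hm0, u, hu, rfl⟩
      · rw [show t - m.val - i.val = t - m.val by omega] at hS
        obtain ⟨u, hu, rfl⟩ := hS
        refine Or.inr ⟨hm, u, hu, t - m.val, by omega, by omega, ?_⟩
        have h0 : t - (t - m.val) - m.val = 0 := by omega
        rw [h0]
        simp
      · refine Or.inl ⟨hm0, ?_⟩
        have : (u ++ 0 :: List.replicate (t - 1 - i.val) 1) ++ [0] = u ++ gy t := by
          rw [gy]
          have : t - 1 - i.val = t - 1 := by omega
          rw [this]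
          simp
        rw [this]
        exact append_mem_L hu (Or.inr (Or.inr rfl))
  · rw [mem_ntStep_inr] at hstep
    rw [sem_inr] at hsem
    rcases hstep with ⟨rfl, ⟨j', hj', rfl⟩ | ⟨hj0, i', m', him, hm', rfl⟩⟩ |
      ⟨rfl, hj0, rfl | ⟨i', m', hi', hm', rfl⟩⟩
    · -- letter 1, inr j → inr j' with j' + 1 = j
      rcases hsem with ⟨hj0, _⟩ | ⟨hj, u, hu, a, ha1, haj, rfl⟩
      · omega
      rw [sem_inr]
      rcases Nat.eq_zero_or_pos j'.val with hj'0 | hj'1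
      · -- j' = 0 : completes a generator gx a
        refine Or.inl ⟨hj'0, ?_⟩
        have hja : j.val = 1 := by omega
        obtain ⟨k, hk⟩ : ∃ k, t - a - j.val = k := ⟨_, rfl⟩
        have heq : (u ++ (List.replicate a 1 ++ 0 :: List.replicate (t - a - j.val) 1)) ++ [1]
            = u ++ gx t a := by
          rw [hk, gx, show t - a = k + 1 by omega, cons_rep_snoc]
          simp
        rw [heq]
        exact append_mem_L hu (Or.inr (Or.inl ⟨a, ha1, by omega, rfl⟩))
      · refine (sem_inr).2 (Or.inr ⟨hj'1, u, hu, a, ha1, by omega, ?_⟩)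
        have harith : t - a - j.val + 1 = t - a - j'.val := by omega
        rw [← harith, cons_rep_snoc]
        simp
    · -- letter 1, boundary spawns pending (i', m')
      rcases hsem with ⟨_, hw⟩ | ⟨hj, _⟩
      swap; · omega
      rw [sem_inl]
      refine Or.inl ⟨hm', by omega, ?_⟩
      have h1 : t - m'.val - i'.val = 1 := by omega
      rw [h1]
      exact ⟨w, hw, by simp [rep_one]⟩
    · -- letter 0, boundary → boundary via [0]
      rcases hsem with ⟨hj00, hw⟩ | ⟨hj, _⟩
      swap; · omega
      rw [sem_inr]
      exact Or.inl ⟨hj0, by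
        have : w ++ [(0 : Fin 2)] = w ++ [0] := rfl
        exact append_mem_L hw (Or.inl rfl)⟩
    · -- letter 0, boundary starts gy : pending (t-1, 0)
      rcases hsem with ⟨hj00, hw⟩ | ⟨hj, _⟩
      swap; · omega
      rw [sem_inl]
      refine Or.inr ⟨hm', w, hw, ?_⟩
      have h0 : t - 1 - i'.val = 0 := by omega
      rw [h0]
      simp


variable {t : ℕ}

lemma snoc_eq {w u p : W2} {c b : Fin 2} (h : w ++ [c] = u ++ (p ++ [b])) :
    w = u ++ p ∧ c = b := by
  rw [← List.append_assoc] at h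
  exact snoc_inj h

lemma step_sem_bwd (ht : 2 ≤ t) {w : W2} {c : Fin 2} {s : St t}
    (h : sem t s (w ++ [c])) : ∃ s₀, sem t s₀ w ∧ s ∈ ntStep t s₀ c := by
  rcases s with ⟨i, m⟩ | j
  · rw [sem_inl] at h
    rcases h with ⟨hm, him, hS⟩ | ⟨hm0, u, hu, heq⟩
    · -- x-pending
      obtain ⟨u, hu, heq⟩ := hS
      have he1 : 1 ≤ t - m.val - i.val := by omega
      obtain ⟨e', he'⟩ : ∃ e', t - m.val - i.val = e' + 1 := ⟨t - m.val - i.val - 1, by omega⟩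
      rw [he', List.replicate_succ', ← List.append_assoc] at heq
      obtain ⟨rfl, rfl⟩ := snoc_inj heq
      rcases Nat.eq_zero_or_pos e' with rfl | he'1
      · -- spawn from boundary
        refine ⟨.inr ⟨0, by omega⟩, ?_, ?_⟩
        · rw [sem_inr]
          exact Or.inl ⟨rfl, by simpa using hu⟩
        · rw [mem_ntStep_inr]
          exact Or.inl ⟨rfl, Or.inr ⟨rfl, i, m, by omega, hm, rfl⟩⟩
      · -- from pending (i+1, m)
        refine ⟨.inl (⟨i.val + 1, by omega⟩, m), ?_, ?_⟩
        · rw [sem_inl]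
          refine Or.inl ⟨hm, by simp; omega, ?_⟩
          rw [show t - m.val - (i.val + 1) = e' by omega]
          exact ⟨u, hu, rfl⟩
        · rw [mem_ntStep_inl]
          exact Or.inl ⟨rfl, i, by simp, rfl⟩
    · -- y-pending
      rcases Nat.eq_zero_or_pos (t - 1 - i.val) with hk | hk
      · -- i = t-1 : just consumed the first 0 of gy
        rw [hk] at heq
        have heq' : w ++ [c] = u ++ ([] ++ [0]) := by simpa using heq
        obtain ⟨rfl, rfl⟩ := snoc_eq heq'
        refine ⟨.inr ⟨0, by omega⟩, ?_, ?_⟩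
        · rw [sem_inr]; exact Or.inl ⟨rfl, by simpa using hu⟩
        · rw [mem_ntStep_inr]
          exact Or.inr ⟨rfl, rfl, Or.inr ⟨i, m, by omega, hm0, rfl⟩⟩
      · obtain ⟨k, hk'⟩ : ∃ k, t - 1 - i.val = k + 1 := ⟨t - 1 - i.val - 1, by omega⟩
        rw [hk', cons_rep_snoc, ← List.append_assoc] at heq
        obtain ⟨rfl, rfl⟩ := snoc_inj heq
        refine ⟨.inl (⟨i.val + 1, by omega⟩, m), ?_, ?_⟩
        · rw [sem_inl]
          refine Or.inr ⟨hm0, u, hu, ?_⟩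
          rw [show t - 1 - (i.val + 1) = k by omega]
        · rw [mem_ntStep_inl]
          exact Or.inl ⟨rfl, i, by simp, rfl⟩
  · rw [sem_inr] at h
    rcases h with ⟨hj0, hmem⟩ | ⟨hj1, u, hu, a, ha1, haj, heq⟩
    · -- accepting: w ++ [c] ∈ L
      obtain ⟨u, hu, g, hg, heq⟩ := exists_last hmem (by simp)
      rcases hg with rfl | ⟨a, ha1, ha2, rfl⟩ | rfl
      · -- g = [0]
        have heq' : w ++ [c] = u ++ ([] ++ [0]) := by simpa using heq
        obtain ⟨rfl, rfl⟩ := snoc_eq heq'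
        refine ⟨.inr j, ?_, ?_⟩
        · rw [sem_inr]; exact Or.inl ⟨hj0, by simpa using hu⟩
        · rw [mem_ntStep_inr]
          exact Or.inr ⟨rfl, hj0, Or.inl rfl⟩
      · -- g = gx a
        rw [gx, show t - a = (t - a - 1) + 1 by omega, cons_rep_snoc] at heq
        have heq2 : w ++ [c] = (u ++ List.replicate a 1 ++ 0 :: List.replicate (t - a - 1) 1) ++ [1] := by
          rw [heq]; simp [List.append_assoc]
        obtain ⟨rfl, rfl⟩ := snoc_inj heq2
        refine ⟨.inr ⟨1, by omega⟩, ?_, ?_⟩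
        · rw [sem_inr]
          refine Or.inr ⟨by simp, u, hu, a, ha1, by simp; omega, ?_⟩
          simp [List.append_assoc]
        · rw [mem_ntStep_inr]
          exact Or.inl ⟨rfl, Or.inl ⟨j, by simp; omega, rfl⟩⟩
      · -- g = gy
        rw [gy] at heq
        have heq' : w ++ [c] = (u ++ 0 :: List.replicate (t-1) 1) ++ [0] := by
          simpa [List.append_assoc] using heq
        obtain ⟨rfl, rfl⟩ := snoc_inj heq'
        refine ⟨.inl (⟨0, by omega⟩, ⟨0, by omega⟩), ?_, ?_⟩
        · rw [sem_inl]
          refine Or.inr ⟨rfl, u, hu, ?_⟩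
          simp
        · rw [mem_ntStep_inl]
          refine Or.inr ⟨rfl, rfl, ?_⟩
          have : j = (⟨0, by omega⟩ : Fin t) := Fin.ext hj0
          rw [this]
    · -- partial: w ++ [c] = u ++ 1^a 0 1^(t-a-j)
      rcases Nat.eq_zero_or_pos (t - a - j.val) with hk | hk
      · -- t - a - j = 0 : last char is the 0
        rw [hk] at heq
        have heq' : w ++ [c] = (u ++ List.replicate a 1) ++ [0] := by
          simpa [List.append_assoc] using heq
        obtain ⟨rfl, rfl⟩ := snoc_inj heq'
        refine ⟨.inl (⟨0, by omega⟩, j), ?_, ?_⟩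
        · rw [sem_inl]
          refine Or.inl ⟨hj1, by simp; omega, ?_⟩
          rw [show t - j.val - 0 = a by omega]
          exact ⟨u, hu, rfl⟩
        · rw [mem_ntStep_inl]
          exact Or.inr ⟨rfl, rfl, rfl⟩
      · -- still ones to read
        obtain ⟨k, hk'⟩ : ∃ k, t - a - j.val = k + 1 := ⟨t - a - j.val - 1, by omega⟩
        rw [hk', cons_rep_snoc] at heq
        have heq2 : w ++ [c] = (u ++ (List.replicate a 1 ++ 0 :: List.replicate k 1)) ++ [1] := by
          rw [heq]; simp [List.append_assoc]
        obtain ⟨rfl, rfl⟩ := snoc_inj heq2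
        refine ⟨.inr ⟨j.val + 1, by omega⟩, ?_, ?_⟩
        · rw [sem_inr]
          refine Or.inr ⟨by simp, u, hu, a, ha1, by simp; omega, ?_⟩
          rw [show t - a - (j.val + 1) = k by omega]

        · rw [mem_ntStep_inr]
          exact Or.inl ⟨rfl, Or.inl ⟨j, by simp, rfl⟩⟩

lemma eval_sem (ht : 2 ≤ t) : ∀ (w : W2) (s : St t), s ∈ (Nt t).eval w ↔ sem t s w := by
  intro w
  induction w using List.reverseRecOn with
  | nil =>
    intro s
    rw [NFA.eval_nil]
    show s ∈ (Nt t).start ↔ _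
    constructor
    · rintro ⟨j, hj0, rfl⟩
      rw [sem_inr]
      exact Or.inl ⟨hj0, nil_mem_L⟩
    · intro hs
      rcases s with ⟨i, m⟩ | j
      · rw [sem_inl] at hs
        rcases hs with ⟨_, him, u, _, heq⟩ | ⟨_, u, _, heq⟩
        · exfalso; have := congrArg List.length heq; simp at this; omega
        · exfalso; have := congrArg List.length heq; simp at this
      · rw [sem_inr] at hs
        rcases hs with ⟨hj0, _⟩ | ⟨_, u, _, a, ha1, _, heq⟩
        · exact ⟨j, hj0, rfl⟩
        · exfalso; have := congrArg List.length heq; simp at this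
  | append_singleton w c ih =>
    intro s
    rw [NFA.eval_append_singleton, NFA.mem_stepSet]
    constructor
    · rintro ⟨s₀, hs₀, hstep⟩
      exact step_sem_fwd ht ⟨s₀, (ih s₀).1 hs₀, hstep⟩
    · intro hs
      obtain ⟨s₀, hsem, hstep⟩ := step_sem_bwd ht hs
      exact ⟨s₀, (ih s₀).2 hsem, hstep⟩

lemma accepts_Nt (ht : 2 ≤ t) : (Nt t).accepts = (SS t)∗ := by
  ext w
  rw [NFA.mem_accepts]
  constructor
  · rintro ⟨s, ⟨j, hj0, rfl⟩, hmem⟩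
    have := (eval_sem ht w (.inr j)).1 hmem
    rw [sem_inr] at this
    rcases this with ⟨_, h⟩ | ⟨h1, _⟩
    · exact h
    · omega
  · intro hw
    refine ⟨.inr ⟨0, by omega⟩, ⟨⟨0, by omega⟩, rfl, rfl⟩, ?_⟩
    exact (eval_sem ht w (.inr ⟨0, by omega⟩)).2 (by rw [sem_inr]; exact Or.inl ⟨rfl, hw⟩)


variable {t : ℕ}

def reDFA {α σ τ : Type*} (M : DFA α σ) (e : σ ≃ τ) : DFA α τ where
  step s a := e (M.step (e.symm s) a)
  start := e M.start
  accept := e.symm ⁻¹' M.accept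

lemma reDFA_evalFrom {α σ τ : Type*} (M : DFA α σ) (e : σ ≃ τ) (s : σ) (x : List α) :
    (reDFA M e).evalFrom (e s) x = e (M.evalFrom s x) := by
  induction x generalizing s with
  | nil => simp
  | cons a x ih =>
    have h1 : (reDFA M e).evalFrom (e s) (a :: x)
        = (reDFA M e).evalFrom ((reDFA M e).step (e s) a) x := rfl
    have h2 : M.evalFrom s (a :: x) = M.evalFrom (M.step s a) x := rfl
    rw [h1, h2, show (reDFA M e).step (e s) a = e (M.step s a) by simp [reDFA], ih]

lemma reDFA_accepts {α σ τ : Type*} (M : DFA α σ) (e : σ ≃ τ) :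
    (reDFA M e).accepts = M.accepts := by
  ext x
  rw [DFA.mem_accepts, DFA.mem_accepts]
  have hstart : (reDFA M e).start = e M.start := rfl
  show (reDFA M e).evalFrom (reDFA M e).start x ∈ (reDFA M e).accept ↔
    M.evalFrom M.start x ∈ M.accept
  rw [hstart, reDFA_evalFrom]
  simp [reDFA]

lemma exists_dfa (ht : 2 ≤ t) : ∃ n, ∃ M : DFA (Fin 2) (Fin n), M.accepts = (SS t)∗ := by
  classical
  let D := (Nt t).toDFA
  refine ⟨Fintype.card (Set (St t)), reDFA D (Fintype.equivFin _), ?_⟩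
  rw [reDFA_accepts, NFA.toDFA_correct, accepts_Nt ht]


end StP

/-- For `t ≥ 2`, with `y = 0 1^{t−1} 0`, `x i = 1^{t−i−1} 0 1^{i+1}` for
`0 ≤ i ≤ t−2`, and `S t = {0, x 0, …, x (t−2), y}`, the state complexity of `S t∗` is at
least `2^{t−2}`. -/
theorem sc_St_lower_bound (t : ℕ) (ht : 2 ≤ t)
    (y : List (Fin 2)) (hy : y = [0] ++ List.replicate (t - 1) 1 ++ [0])
    (x : Fin (t - 1) → List (Fin 2))
    (hx : ∀ i, x i = List.replicate (t - i.val - 1) 1 ++ [0] ++ List.replicate (i.val + 1) 1)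
    (S : Language (Fin 2)) (hS : S = insert [(0 : Fin 2)] (insert y (Set.range x))) :
    2 ^ (t - 2) ≤ stateComplexity (S∗) := by
  have hSS : S = StP.SS t := by
    rw [hS]
    ext g
    constructor
    · rintro (rfl | rfl | ⟨i, rfl⟩)
      · exact Or.inl rfl
      · right; right; rw [hy, StP.gy]; simp
      · have hi := i.isLt
        right; left
        refine ⟨t - 1 - i.val, by omega, by omega, ?_⟩
        rw [hx i, StP.gx]
        rw [show t - 1 - i.val = t - i.val - 1 by omega,
          show t - (t - i.val - 1) = i.val + 1 by omega]
        simp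
    · rintro (rfl | ⟨a, ha1, ha2, rfl⟩ | rfl)
      · exact Or.inl rfl
      · right; right
        refine ⟨⟨t - 1 - a, by omega⟩, ?_⟩
        rw [hx, StP.gx]
        have e1 : t - (t - 1 - a) - 1 = a := by omega
        have e2 : t - 1 - a + 1 = t - a := by omega
        simp only [e1, e2]
        simp
      · right; left; rw [hy, StP.gy]; simp
  rw [hSS]
  obtain ⟨n₀, M₀, hM₀⟩ := StP.exists_dfa ht
  have hne : {n : ℕ | ∃ M : DFA (Fin 2) (Fin n), M.accepts = (StP.SS t)∗}.Nonempty :=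
    ⟨n₀, M₀, hM₀⟩
  obtain ⟨M, hM⟩ := Nat.sInf_mem hne
  exact StP.card_bound ht M hM
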